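/- There exists an integer T > 1 such that ℋ_d^{T,0}([0,1]^d) is non-empty; concretely, there exist Lipschitz vector fields V and W on ℝ², compactly supported in [0,1]², such that the composition Flow(V) ∘ Flow(W) is not the time-1 flow of any Lipschitz vector field compactly supported in [0,1]². -/

import Mathlib

open Metric Set Function Filter Topology

noncomputable section

/-- `f` equals the identity outside `S` (supported† on `S`). -/
def SuppDaggerOn {E : Type*} (f : E → E) (S : Set E) : Prop := ∀ x, x ∉ S → f x = x

/-- `V` vanishes outside `S`. -/
def ZeroOutside {E F : Type*} [Zero F] (V : E → F) (S : Set E) : Prop := ∀ x, x ∉ S → V x = 0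

/-- `φ` is the time-1 solution map of the autonomous ODE `ẋ_t = V (x_t)`:
for every initial condition `x` there is a solution curve starting at `x`
whose time-1 value is `φ x`. -/
def IsTime1Flow {E : Type*} [NormedAddCommGroup E] [NormedSpace ℝ E]
    (V : E → E) (φ : E → E) : Prop :=
  ∀ x : E, ∃ γ : ℝ → E, γ 0 = x ∧ (∀ t : ℝ, HasDerivAt γ (V (γ t)) t) ∧ γ 1 = φ x

/-- `compFlows ψ T = ψ (T-1) ∘ ⋯ ∘ ψ 0`. -/
def compFlows {E : Type*} (ψ : ℕ → E → E) : ℕ → E → E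
  | 0 => id
  | T + 1 => ψ T ∘ compFlows ψ T

/-- Orientation preserving: homotopic to the identity. -/
def HomotopicToId {E : Type*} [TopologicalSpace E] (φ : E → E) : Prop :=
  ∃ f : C(E, E), ⇑f = φ ∧ f.Homotopic (ContinuousMap.id E)

/-- The closed unit cube `[0,1]^d`. -/
def cube01 (d : ℕ) : Set (Fin d → ℝ) := Set.univ.pi fun _ => Set.Icc (0:ℝ) 1

/-- The open unit cube `(0,1)^d`. -/
def cube01open (d : ℕ) : Set (Fin d → ℝ) := Set.univ.pi fun _ => Set.Ioo (0:ℝ) 1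

/-- The ReLU activation. -/
def relu (x : ℝ) : ℝ := max x 0

open scoped Classical in
/-- Number of nonzero entries of a matrix. -/
noncomputable def nnzM {m n : ℕ} (W : Matrix (Fin m) (Fin n) ℝ) : ℕ :=
  (Finset.univ.filter fun p : Fin m × Fin n => W p.1 p.2 ≠ 0).card

open scoped Classical in
/-- Number of nonzero entries of a vector. -/
noncomputable def nnzV {m : ℕ} (b : Fin m → ℝ) : ℕ :=
  (Finset.univ.filter fun i : Fin m => b i ≠ 0).card

/-- `MLPRep σ depth width params n m f`: the map `f : ℝ^n → ℝ^m` is a σ-MLP with `depth`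
affine layers, all hidden layers of dimension at most `width`, and `params` nonzero
parameters, i.e. `f = L_depth ∘ (σ ∘ L_{depth-1}) ∘ ⋯ ∘ (σ ∘ L_1)` for affine maps `L_l`. -/
inductive MLPRep (σ : ℝ → ℝ) :
    (depth width params n m : ℕ) → ((Fin n → ℝ) → (Fin m → ℝ)) → Prop
  | affine {n m : ℕ} (W : Matrix (Fin m) (Fin n) ℝ) (b : Fin m → ℝ) :
      MLPRep σ 1 0 (nnzM W + nnzV b) n m (fun x => W.mulVec x + b)
  | layer {n k m depth width params : ℕ}
      (W : Matrix (Fin k) (Fin n) ℝ) (b : Fin k → ℝ)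
      {f : (Fin k → ℝ) → (Fin m → ℝ)}
      (hf : MLPRep σ depth width params k m f) :
      MLPRep σ (depth + 1) (max k width) (params + (nnzM W + nnzV b)) n m
        (fun x => f (fun i => σ ((W.mulVec x + b) i)))

/-- `f` is a σ-MLP (of some depth, width and parameter count). -/
def IsMLP (σ : ℝ → ℝ) {n m : ℕ} (f : (Fin n → ℝ) → (Fin m → ℝ)) : Prop :=
  ∃ depth width params, MLPRep σ depth width params n m f

/-- `φ` is a composition of `T` time-1 flows of Lipschitz vector fields supported in `[0,1]^d`. -/
def RepByLipFlows (d T : ℕ) (φ : (Fin d → ℝ) → (Fin d → ℝ)) : Prop :=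
  ∃ V : ℕ → ((Fin d → ℝ) → (Fin d → ℝ)),
    (∀ t < T, (∃ K : NNReal, LipschitzWith K (V t)) ∧ ZeroOutside (V t) (cube01 d)) ∧
    ∃ ψ : ℕ → ((Fin d → ℝ) → (Fin d → ℝ)),
      (∀ t < T, IsTime1Flow (V t) (ψ t)) ∧ φ = compFlows ψ T

def dd (u v : ℝ) : ℝ := Real.sqrt (u^2 + v^2)

lemma dd_nonneg (u v : ℝ) : 0 ≤ dd u v := Real.sqrt_nonneg _

lemma dd_triangle (u v u' v' : ℝ) : dd (u + u') (v + v') ≤ dd u v + dd u' v' := by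
  have h1 : dd u v ^ 2 = u^2 + v^2 := Real.sq_sqrt (by positivity)
  have h2 : dd u' v' ^ 2 = u'^2 + v'^2 := Real.sq_sqrt (by positivity)
  have h3 : 0 ≤ dd u v := dd_nonneg u v
  have h4 : 0 ≤ dd u' v' := dd_nonneg u' v'
  have key : (u + u')^2 + (v + v')^2 ≤ (dd u v + dd u' v')^2 := by
    nlinarith [sq_nonneg (u * v' - v * u'), sq_nonneg (dd u v * dd u' v' - (u*u' + v*v')),
      mul_nonneg h3 h4, sq_nonneg (u+u'), sq_nonneg (v+v')]
  calc dd (u+u') (v+v') = Real.sqrt ((u+u')^2 + (v+v')^2) := rfl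
    _ ≤ Real.sqrt ((dd u v + dd u' v')^2) := Real.sqrt_le_sqrt key
    _ = dd u v + dd u' v' := Real.sqrt_sq (by positivity)

lemma abs_le_dd_left (u v : ℝ) : |u| ≤ dd u v := by
  rw [← Real.sqrt_sq_eq_abs]; exact Real.sqrt_le_sqrt (by nlinarith [sq_nonneg v])

lemma abs_le_dd_right (u v : ℝ) : |v| ≤ dd u v := by
  rw [← Real.sqrt_sq_eq_abs]; exact Real.sqrt_le_sqrt (by nlinarith [sq_nonneg u])

lemma dd_comm (u v : ℝ) : dd u v = dd v u := by unfold dd; ring_nf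

lemma dd_neg_left (u v : ℝ) : dd (-u) v = dd u v := by unfold dd; ring_nf

lemma dd_of_val (u v c : ℝ) (hc : 0 ≤ c) (h : u^2 + v^2 = c^2) : dd u v = c := by
  rw [dd, h, Real.sqrt_sq hc]

lemma dd_diff_le (u v u' v' : ℝ) : |dd u v - dd u' v'| ≤ dd (u - u') (v - v') := by
  rw [abs_sub_le_iff]
  constructor
  · have := dd_triangle u' v' (u - u') (v - v')
    simp only [add_sub_cancel] at this; linarith
  · have := dd_triangle u v (u' - u) (v' - v)
    simp only [add_sub_cancel] at this
    have h2 : dd (u' - u) (v' - v) = dd (u - u') (v - v') := by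
      rw [show u' - u = -(u - u') by ring, show v' - v = -(v - v') by ring,
        dd_neg_left, dd_comm, dd_neg_left, dd_comm]
    linarith




/-- distance from `x` to center `(a,b)`. -/
def rr (a b : ℝ) (x : Fin 2 → ℝ) : ℝ := dd (x 0 - a) (x 1 - b)

/-- Twist vector field about `(a,b)` with angular profile `ω`. -/
def tvf (a b : ℝ) (ω : ℝ → ℝ) (x : Fin 2 → ℝ) : Fin 2 → ℝ :=
  ![ω (rr a b x) * (b - x 1), ω (rr a b x) * (x 0 - a)]

/-- Rotation about `(a,b)` by angle `θ`, applied to `x`. -/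
def rot (a b θ : ℝ) (x : Fin 2 → ℝ) : Fin 2 → ℝ :=
  ![a + Real.cos θ * (x 0 - a) - Real.sin θ * (x 1 - b),
    b + Real.sin θ * (x 0 - a) + Real.cos θ * (x 1 - b)]

/-- Twist map about `(a,b)` with profile `ω`. -/
def tmap (a b : ℝ) (ω : ℝ → ℝ) (x : Fin 2 → ℝ) : Fin 2 → ℝ := rot a b (ω (rr a b x)) x

/-- Flow curve of the twist field through `x`. -/
def tcur (a b θ : ℝ) (x : Fin 2 → ℝ) (t : ℝ) : Fin 2 → ℝ := rot a b (t * θ) x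

lemma rr_rot (a b θ : ℝ) (x : Fin 2 → ℝ) : rr a b (rot a b θ x) = rr a b x := by
  unfold rr rot dd
  simp only [Matrix.cons_val_zero, Matrix.cons_val_one, Matrix.head_cons]
  congr 1
  have h := Real.sin_sq_add_cos_sq θ
  linear_combination ((x 0 - a)^2 + (x 1 - b)^2) * h

lemma rot_zero (a b : ℝ) (x : Fin 2 → ℝ) : rot a b 0 x = x := by
  funext i
  fin_cases i <;> simp [rot] <;> ring

lemma tcur_zero (a b θ : ℝ) (x : Fin 2 → ℝ) : tcur a b θ x 0 = x := by
  rw [tcur, zero_mul, rot_zero]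

lemma tcur_one (a b : ℝ) (ω : ℝ → ℝ) (x : Fin 2 → ℝ) :
    tcur a b (ω (rr a b x)) x 1 = tmap a b ω x := by
  rw [tcur, one_mul, tmap]

lemma tcur_hasDerivAt (a b : ℝ) (ω : ℝ → ℝ) (x : Fin 2 → ℝ) (t : ℝ) :
    HasDerivAt (tcur a b (ω (rr a b x)) x) (tvf a b ω (tcur a b (ω (rr a b x)) x t)) t := by
  set θ := ω (rr a b x) with hθ
  have hrr : rr a b (tcur a b θ x t) = rr a b x := rr_rot a b (t * θ) x
  rw [hasDerivAt_pi]
  intro i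
  have hc : HasDerivAt (fun s : ℝ => Real.cos (s * θ)) (-Real.sin (t * θ) * θ) t := by
    simpa [Function.comp_def] using (Real.hasDerivAt_cos (t * θ)).comp t (hasDerivAt_mul_const θ)
  have hs : HasDerivAt (fun s : ℝ => Real.sin (s * θ)) (Real.cos (t * θ) * θ) t := by
    simpa [Function.comp_def] using (Real.hasDerivAt_sin (t * θ)).comp t (hasDerivAt_mul_const θ)
  fin_cases i
  · -- component 0
    have : HasDerivAt (fun s => a + Real.cos (s * θ) * (x 0 - a) - Real.sin (s * θ) * (x 1 - b))
        ((-Real.sin (t * θ) * θ) * (x 0 - a) - (Real.cos (t * θ) * θ) * (x 1 - b)) t :=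
      ((hc.mul_const _).const_add a).sub (hs.mul_const _)
    refine this.congr_deriv ?_
    symm
    show tvf a b ω (tcur a b θ x t) 0 = _
    simp only [tvf, Matrix.cons_val_zero]
    rw [hrr, ← hθ]
    simp only [tcur, rot, Matrix.cons_val_zero, Matrix.cons_val_one, Matrix.head_cons]
    ring
  · have : HasDerivAt (fun s => b + Real.sin (s * θ) * (x 0 - a) + Real.cos (s * θ) * (x 1 - b))
        ((Real.cos (t * θ) * θ) * (x 0 - a) + (-Real.sin (t * θ) * θ) * (x 1 - b)) t :=
      ((hs.mul_const _).const_add b).add (hc.mul_const _)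
    refine this.congr_deriv ?_
    symm
    show tvf a b ω (tcur a b θ x t) 1 = _
    simp only [tvf, Matrix.cons_val_one, Matrix.head_cons]
    rw [hrr, ← hθ]
    simp only [tcur, rot, Matrix.cons_val_zero, Matrix.cons_val_one, Matrix.head_cons]
    ring




lemma dist_eval (x y : Fin 2 → ℝ) (i : Fin 2) : |x i - y i| ≤ dist x y := by
  rw [← Real.dist_eq]
  exact dist_le_pi_dist x y i

lemma dd_le_abs_add (u v : ℝ) : dd u v ≤ |u| + |v| := by
  rw [dd]
  have h : u^2 + v^2 ≤ (|u| + |v|)^2 := by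
    nlinarith [sq_abs u, sq_abs v, mul_nonneg (abs_nonneg u) (abs_nonneg v)]
  calc Real.sqrt (u^2+v^2) ≤ Real.sqrt ((|u|+|v|)^2) := Real.sqrt_le_sqrt h
    _ = |u| + |v| := Real.sqrt_sq (by positivity)

lemma rr_diff_le_dist (a b : ℝ) (x y : Fin 2 → ℝ) :
    |rr a b x - rr a b y| ≤ 2 * dist x y := by
  have h := dd_diff_le (x 0 - a) (x 1 - b) (y 0 - a) (y 1 - b)
  have h2 : dd (x 0 - a - (y 0 - a)) (x 1 - b - (y 1 - b)) ≤ |x 0 - y 0| + |x 1 - y 1| := by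
    have := dd_le_abs_add (x 0 - a - (y 0 - a)) (x 1 - b - (y 1 - b))
    simpa using this
  have e0 := dist_eval x y 0
  have e1 := dist_eval x y 1
  rw [rr, rr]
  linarith

/-- Key product estimate for the twist-field Lipschitz bound. -/
lemma twist_comp_est {L M R d θx θy ux uy rx ry : ℝ}
    (hL : 0 ≤ L) (hM : 0 ≤ M) (hR : 0 ≤ R) (hd : 0 ≤ d)
    (hθy : |θy| ≤ M) (hθd : |θx - θy| ≤ 2 * L * d)
    (hux : |ux| ≤ rx) (huy : |uy| ≤ ry)
    (h0x : R ≤ rx → θx = 0) (h0y : R ≤ ry → θy = 0)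
    (hu : |ux - uy| ≤ d) :
    |θx * ux - θy * uy| ≤ (2 * L * R + M) * d := by
  rcases lt_or_ge rx R with hx | hx
  · -- grouping 1 : (θx - θy) ux + θy (ux - uy)
    have key : θx * ux - θy * uy = (θx - θy) * ux + θy * (ux - uy) := by ring
    rw [key]
    have h1 : |(θx - θy) * ux| ≤ (2 * L * d) * R := by
      rw [abs_mul]
      have hr : |ux| ≤ R := le_trans hux (le_of_lt hx)
      have := mul_le_mul hθd hr (abs_nonneg _) (by positivity)
      linarith
    have h2 : |θy * (ux - uy)| ≤ M * d := by
      rw [abs_mul]; exact mul_le_mul hθy hu (abs_nonneg _) hM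
    calc |(θx - θy) * ux + θy * (ux - uy)| ≤ |(θx - θy) * ux| + |θy * (ux - uy)| := abs_add_le _ _
      _ ≤ (2 * L * d) * R + M * d := by linarith
      _ = (2 * L * R + M) * d := by ring
  · have hθx : θx = 0 := h0x hx
    rcases lt_or_ge ry R with hy | hy
    · -- grouping 2 : θx (ux - uy) + (θx - θy) uy, θx = 0
      have key : θx * ux - θy * uy = (θx - θy) * uy := by rw [hθx]; ring
      rw [key, abs_mul]
      have hr : |uy| ≤ R := le_trans huy (le_of_lt hy)
      have h1 := mul_le_mul hθd hr (abs_nonneg _) (by positivity)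
      have h2 : (2 * L * d) * R = (2 * L * R) * d := by ring
      nlinarith
    · have hθy0 : θy = 0 := h0y hy
      rw [hθx, hθy0]
      simp
      positivity

/-- Lipschitz bound for the twist vector field. -/
lemma tvf_lipschitz (a b : ℝ) (ω : ℝ → ℝ) (L M R : ℝ)
    (hL : 0 ≤ L) (hM : 0 ≤ M) (hR : 0 ≤ R)
    (hω : ∀ r s : ℝ, |ω r - ω s| ≤ L * |r - s|)
    (hb : ∀ r : ℝ, |ω r| ≤ M)
    (h0 : ∀ r : ℝ, R ≤ r → ω r = 0)
    (K : NNReal) (hK : 2 * L * R + M ≤ (K : ℝ)) :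
    LipschitzWith K (tvf a b ω) := by
  rw [lipschitzWith_iff_dist_le_mul]
  intro x y
  have hd : (0:ℝ) ≤ dist x y := dist_nonneg
  rw [dist_pi_le_iff (by positivity)]
  intro i
  rw [Real.dist_eq]
  have hθd : |ω (rr a b x) - ω (rr a b y)| ≤ 2 * L * dist x y := by
    calc |ω (rr a b x) - ω (rr a b y)| ≤ L * |rr a b x - rr a b y| := hω _ _
      _ ≤ L * (2 * dist x y) := by
          exact mul_le_mul_of_nonneg_left (rr_diff_le_dist a b x y) hL
      _ = 2 * L * dist x y := by ring
  have h0x : R ≤ rr a b x → ω (rr a b x) = 0 := h0 _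
  have h0y : R ≤ rr a b y → ω (rr a b y) = 0 := h0 _
  have main : ∀ ux uy rx' ry', |ux| ≤ rx' → |uy| ≤ ry' → |ux - uy| ≤ dist x y →
      rx' = rr a b x → ry' = rr a b y →
      |ω (rr a b x) * ux - ω (rr a b y) * uy| ≤ (2 * L * R + M) * dist x y := by
    intro ux uy rx' ry' h1 h2 h3 h4 h5
    subst h4; subst h5
    exact twist_comp_est hL hM hR hd (hb _) hθd h1 h2 h0x h0y h3
  have step : |tvf a b ω x i - tvf a b ω y i| ≤ (2 * L * R + M) * dist x y := by
    fin_cases i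
    · simp only [tvf, Matrix.cons_val_zero]
      refine main (b - x 1) (b - y 1) _ _ ?_ ?_ ?_ rfl rfl
      · rw [rr]; rw [show b - x 1 = -(x 1 - b) by ring, abs_neg]; exact abs_le_dd_right _ _
      · rw [rr]; rw [show b - y 1 = -(y 1 - b) by ring, abs_neg]; exact abs_le_dd_right _ _
      · rw [show b - x 1 - (b - y 1) = -(x 1 - y 1) by ring, abs_neg]; exact dist_eval x y 1
    · simp only [tvf, Matrix.cons_val_one, Matrix.head_cons]
      refine main (x 0 - a) (y 0 - a) _ _ ?_ ?_ ?_ rfl rfl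
      · rw [rr]; exact abs_le_dd_left _ _
      · rw [rr]; exact abs_le_dd_left _ _
      · rw [show x 0 - a - (y 0 - a) = x 0 - y 0 by ring]; exact dist_eval x y 0
  calc |tvf a b ω x i - tvf a b ω y i| ≤ (2 * L * R + M) * dist x y := step
    _ ≤ (K : ℝ) * dist x y := mul_le_mul_of_nonneg_right hK hd




lemma tmap_isTime1Flow (a b : ℝ) (ω : ℝ → ℝ) :
    IsTime1Flow (tvf a b ω) (tmap a b ω) := fun x =>
  ⟨tcur a b (ω (rr a b x)) x, tcur_zero a b _ x, tcur_hasDerivAt a b ω x, tcur_one a b ω x⟩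

lemma funext2 {f g : Fin 2 → ℝ} (h0 : f 0 = g 0) (h1 : f 1 = g 1) : f = g :=
  funext fun i => by fin_cases i <;> [exact h0; exact h1]

/-- rotating back: `rot` by `-θ` undoes `rot` by `θ`. -/
lemma rot_neg_rot (a b θ : ℝ) (x : Fin 2 → ℝ) : rot a b (-θ) (rot a b θ x) = x := by
  have h := Real.sin_sq_add_cos_sq θ
  apply funext2
  · simp only [rot, Matrix.cons_val_zero, Matrix.cons_val_one, Matrix.head_cons,
      Real.cos_neg, Real.sin_neg]
    linear_combination (x 0 - a) * h
  · simp only [rot, Matrix.cons_val_zero, Matrix.cons_val_one, Matrix.head_cons,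
      Real.cos_neg, Real.sin_neg]
    linear_combination (x 1 - b) * h

lemma tmap_left_inv (a b : ℝ) (ω : ℝ → ℝ) (x : Fin 2 → ℝ) :
    tmap a b (fun r => -(ω r)) (tmap a b ω x) = x := by
  rw [tmap, tmap, rr_rot]
  exact rot_neg_rot a b (ω (rr a b x)) x

lemma rr_continuous (a b : ℝ) : Continuous (rr a b) := by
  unfold rr dd
  fun_prop

lemma tmap_continuous (a b : ℝ) (ω : ℝ → ℝ) (hω : Continuous ω) :
    Continuous (tmap a b ω) := by
  have h : Continuous fun x : Fin 2 → ℝ => ω (rr a b x) := hω.comp (rr_continuous a b)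
  have h0 : Continuous fun x : Fin 2 → ℝ => x 0 := continuous_apply 0
  have h1 : Continuous fun x : Fin 2 → ℝ => x 1 := continuous_apply 1
  refine continuous_pi fun i => ?_
  fin_cases i
  · show Continuous fun x : Fin 2 → ℝ =>
      a + Real.cos (ω (rr a b x)) * (x 0 - a) - Real.sin (ω (rr a b x)) * (x 1 - b)
    exact (continuous_const.add ((Real.continuous_cos.comp h).mul
      (h0.sub continuous_const))).sub ((Real.continuous_sin.comp h).mul
      (h1.sub continuous_const))
  · show Continuous fun x : Fin 2 → ℝ =>
      b + Real.sin (ω (rr a b x)) * (x 0 - a) + Real.cos (ω (rr a b x)) * (x 1 - b)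
    exact (continuous_const.add ((Real.continuous_sin.comp h).mul
      (h0.sub continuous_const))).add ((Real.continuous_cos.comp h).mul
      (h1.sub continuous_const))

/-- twist homeomorphism -/
def tHomeo (a b : ℝ) (ω : ℝ → ℝ) (hω : Continuous ω) : Homeomorph (Fin 2 → ℝ) (Fin 2 → ℝ) where
  toFun := tmap a b ω
  invFun := tmap a b (fun r => -(ω r))
  left_inv := tmap_left_inv a b ω
  right_inv := fun x => by
    have h2 : (fun r => -(-(ω r))) = ω := by funext r; ring
    have h3 := tmap_left_inv a b (fun r => -(ω r)) x
    rwa [h2] at h3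
  continuous_toFun := tmap_continuous a b ω hω
  continuous_invFun := tmap_continuous a b (fun r => -(ω r)) (hω.neg)



def clamp (t : ℝ) : ℝ := min 1 (max t 0)

lemma clamp_nonneg (t : ℝ) : 0 ≤ clamp t := le_min zero_le_one (le_max_right _ _)
lemma clamp_le_one (t : ℝ) : clamp t ≤ 1 := min_le_left _ _
lemma clamp_of_ge {t : ℝ} (h : 1 ≤ t) : clamp t = 1 := by
  rw [clamp, max_eq_left (by linarith), min_eq_left h]
lemma clamp_of_le {t : ℝ} (h : t ≤ 0) : clamp t = 0 := by
  rw [clamp, max_eq_right h, min_eq_right zero_le_one]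
lemma clamp_diff (t s : ℝ) : |clamp t - clamp s| ≤ |t - s| := by
  rw [clamp, clamp]
  calc |min 1 (max t 0) - min 1 (max s 0)| ≤ max |(1:ℝ) - 1| |max t 0 - max s 0| :=
        abs_min_sub_min_le_max 1 (max t 0) 1 (max s 0)
    _ ≤ |t - s| := max_le (by simp [abs_nonneg]) (abs_max_sub_max_le_abs t s 0)

/-- bump profile: value 1 on [c2,c3], 0 outside (c1,c4), Lipschitz 100 -/
def bump (c1 c4 r : ℝ) : ℝ := min (clamp (100*(r - c1))) (clamp (100*(c4 - r)))

lemma bump_nonneg (c1 c4 r : ℝ) : 0 ≤ bump c1 c4 r :=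
  le_min (clamp_nonneg _) (clamp_nonneg _)
lemma bump_le_one (c1 c4 r : ℝ) : bump c1 c4 r ≤ 1 :=
  le_trans (min_le_left _ _) (clamp_le_one _)
lemma bump_eq_one {c1 c4 r : ℝ} (h1 : c1 + 1/100 ≤ r) (h2 : r ≤ c4 - 1/100) :
    bump c1 c4 r = 1 := by
  rw [bump, clamp_of_ge (by linarith), clamp_of_ge (by linarith), min_self]
lemma bump_eq_zero_right {c1 c4 r : ℝ} (h : c4 ≤ r) : bump c1 c4 r = 0 := by
  rw [bump, clamp_of_le (t := 100*(c4 - r)) (by linarith), min_eq_right (clamp_nonneg _)]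
lemma bump_eq_zero_left {c1 c4 r : ℝ} (h : r ≤ c1) : bump c1 c4 r = 0 := by
  rw [bump, clamp_of_le (t := 100*(r - c1)) (by linarith), min_eq_left (clamp_nonneg _)]
lemma bump_diff (c1 c4 r s : ℝ) : |bump c1 c4 r - bump c1 c4 s| ≤ 100 * |r - s| := by
  have h := abs_min_sub_min_le_max (clamp (100*(r - c1))) (clamp (100*(c4 - r)))
    (clamp (100*(s - c1))) (clamp (100*(c4 - s)))
  have h1 : |clamp (100*(r - c1)) - clamp (100*(s - c1))| ≤ 100 * |r - s| := by
    calc _ ≤ |100*(r - c1) - 100*(s - c1)| := clamp_diff _ _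
      _ = 100 * |r - s| := by
          rw [show 100*(r - c1) - 100*(s - c1) = 100 * (r - s) by ring, abs_mul]
          norm_num
  have h2 : |clamp (100*(c4 - r)) - clamp (100*(c4 - s))| ≤ 100 * |r - s| := by
    calc _ ≤ |100*(c4 - r) - 100*(c4 - s)| := clamp_diff _ _
      _ = 100 * |r - s| := by
          rw [show 100*(c4 - r) - 100*(c4 - s) = 100 * (s - r) by ring, abs_mul,
            abs_sub_comm s r]
          norm_num
  exact le_trans h (max_le h1 h2)

lemma bump_continuous (c1 c4 : ℝ) : Continuous (bump c1 c4) := by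
  unfold bump clamp; fun_prop

/-- the two angular profiles -/
def omg1 (r : ℝ) : ℝ := (Real.pi/2) * bump (8/100) (12/100) r
def omg2 (r : ℝ) : ℝ := (Real.pi/2) * bump (125/1000) (158/1000) r

lemma pi_half_pos : (0:ℝ) < Real.pi/2 := by positivity
lemma pi_half_le_two : Real.pi/2 ≤ 2 := by nlinarith [Real.pi_le_four]

lemma omg1_plateau {r : ℝ} (h1 : 9/100 ≤ r) (h2 : r ≤ 11/100) : omg1 r = Real.pi/2 := by
  rw [omg1, bump_eq_one (by linarith) (by linarith), mul_one]
lemma omg1_zero {r : ℝ} (h : 12/100 ≤ r) : omg1 r = 0 := by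
  rw [omg1, bump_eq_zero_right h, mul_zero]
lemma omg2_plateau {r : ℝ} (h1 : 135/1000 ≤ r) (h2 : r ≤ 148/1000) : omg2 r = Real.pi/2 := by
  rw [omg2, bump_eq_one (by linarith) (by linarith), mul_one]
lemma omg2_zero_left {r : ℝ} (h : r ≤ 125/1000) : omg2 r = 0 := by
  rw [omg2, bump_eq_zero_left (by linarith), mul_zero]
lemma omg2_zero {r : ℝ} (h : 158/1000 ≤ r) : omg2 r = 0 := by
  rw [omg2, bump_eq_zero_right (by linarith), mul_zero]

lemma omg_lip_aux (c1 c4 : ℝ) (r s : ℝ) :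
    |(Real.pi/2) * bump c1 c4 r - (Real.pi/2) * bump c1 c4 s| ≤ 200 * |r - s| := by
  rw [← mul_sub, abs_mul, abs_of_nonneg (le_of_lt pi_half_pos)]
  have h := bump_diff c1 c4 r s
  have h2 := mul_le_mul pi_half_le_two h (abs_nonneg _) (by norm_num : (0:ℝ) ≤ 2)
  linarith

lemma omg1_lip (r s : ℝ) : |omg1 r - omg1 s| ≤ 200 * |r - s| := omg_lip_aux _ _ r s
lemma omg2_lip (r s : ℝ) : |omg2 r - omg2 s| ≤ 200 * |r - s| := omg_lip_aux _ _ r s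

lemma omg_bound_aux (c1 c4 r : ℝ) : |(Real.pi/2) * bump c1 c4 r| ≤ 2 := by
  rw [abs_mul, abs_of_nonneg (le_of_lt pi_half_pos), abs_of_nonneg (bump_nonneg _ _ _)]
  nlinarith [pi_half_le_two, pi_half_pos, bump_le_one c1 c4 r, bump_nonneg c1 c4 r]

lemma omg1_bound (r : ℝ) : |omg1 r| ≤ 2 := omg_bound_aux _ _ r
lemma omg2_bound (r : ℝ) : |omg2 r| ≤ 2 := omg_bound_aux _ _ r

lemma omg1_supp {r : ℝ} (h : (1/5:ℝ) ≤ r) : omg1 r = 0 := omg1_zero (by linarith)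
lemma omg2_supp {r : ℝ} (h : (1/5:ℝ) ≤ r) : omg2 r = 0 := omg2_zero (by linarith)

lemma omg1_continuous : Continuous omg1 := (continuous_const.mul (bump_continuous _ _))
lemma omg2_continuous : Continuous omg2 := (continuous_const.mul (bump_continuous _ _))

-- sqrt bound: the radius sqrt(1/50)
lemma sqrt_fifty_lb : (141/1000 : ℝ) ≤ Real.sqrt (1/50) := by
  rw [show (141/1000:ℝ) = Real.sqrt ((141/1000)^2) from (Real.sqrt_sq (by norm_num)).symm]
  exact Real.sqrt_le_sqrt (by norm_num)
lemma sqrt_fifty_ub : Real.sqrt (1/50) ≤ (142/1000 : ℝ) := by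
  rw [show (142/1000:ℝ) = Real.sqrt ((142/1000)^2) from (Real.sqrt_sq (by norm_num)).symm]
  exact Real.sqrt_le_sqrt (by norm_num)


/-! ### The concrete example -/

def pp : Fin 2 → ℝ := ![2/5, 1/2]
def qq : Fin 2 → ℝ := ![3/10, 2/5]

/-- first twist map (about `(3/10, 1/2)`) -/
def R1 : (Fin 2 → ℝ) → (Fin 2 → ℝ) := tmap (3/10) (1/2) omg1
/-- second twist map (about `(2/5, 1/2)`) -/
def R2 : (Fin 2 → ℝ) → (Fin 2 → ℝ) := tmap (2/5) (1/2) omg2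

def phi : (Fin 2 → ℝ) → (Fin 2 → ℝ) := fun x => R2 (R1 x)

lemma rot_pi_half (a b : ℝ) (x : Fin 2 → ℝ) :
    rot a b (Real.pi/2) x = ![a + b - x 1, b - a + x 0] := by
  apply funext2 <;>
    simp only [rot, Real.cos_pi_div_two, Real.sin_pi_div_two, Matrix.cons_val_zero,
      Matrix.cons_val_one, Matrix.head_cons] <;> ring

lemma tmap_id_of {a b : ℝ} {ω : ℝ → ℝ} {x : Fin 2 → ℝ} (h : ω (rr a b x) = 0) :
    tmap a b ω x = x := by rw [tmap, h, rot_zero]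

lemma dd_small (u v : ℝ) (hu : |u| ≤ 1/1000) (hv : |v| ≤ 1/1000) : dd u v ≤ 2/1000 := by
  have := dd_le_abs_add u v; linarith

/-- Near `pp`, `phi` is the exact point reflection `x ↦ (7/10 - x₀, 9/10 - x₁)`. -/
lemma phi_near_p {x : Fin 2 → ℝ} (hx : rr (2/5) (1/2) x ≤ 1/1000) :
    phi x = ![7/10 - x 0, 9/10 - x 1] := by
  have e0 : |x 0 - 2/5| ≤ 1/1000 := le_trans (abs_le_dd_left _ _) hx
  have e1 : |x 1 - 1/2| ≤ 1/1000 := le_trans (abs_le_dd_right _ _) hx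
  rw [abs_le] at e0 e1
  -- step 1 : the first twist is an exact π/2 rotation near p
  have hr1 : omg1 (rr (3/10) (1/2) x) = Real.pi/2 := by
    apply omg1_plateau
    · calc (9/100 : ℝ) ≤ x 0 - 3/10 := by linarith [e0.1]
        _ ≤ |x 0 - 3/10| := le_abs_self _
        _ ≤ rr (3/10) (1/2) x := abs_le_dd_left _ _
    · calc rr (3/10) (1/2) x ≤ |x 0 - 3/10| + |x 1 - 1/2| := dd_le_abs_add _ _
        _ ≤ 11/100 := by
            have h0 : |x 0 - 3/10| ≤ 101/1000 := abs_le.mpr ⟨by linarith [e0.1], by linarith [e0.2]⟩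
            have h1 : |x 1 - 1/2| ≤ 1/1000 := abs_le.mpr ⟨e1.1, e1.2⟩
            linarith
  have hy : R1 x = ![4/5 - x 1, 1/5 + x 0] := by
    rw [R1, tmap, hr1, rot_pi_half]
    apply funext2 <;>
      simp only [Matrix.cons_val_zero, Matrix.cons_val_one, Matrix.head_cons] <;> norm_num
  -- step 2 : the second twist is an exact π/2 rotation near m
  have hr2 : omg2 (rr (2/5) (1/2) (![4/5 - x 1, 1/5 + x 0] : Fin 2 → ℝ)) = Real.pi/2 := by
    have hrw : rr (2/5) (1/2) (![4/5 - x 1, 1/5 + x 0] : Fin 2 → ℝ)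
        = dd (2/5 - x 1) (x 0 - 3/10) := by
      rw [rr]
      simp only [Matrix.cons_val_zero, Matrix.cons_val_one, Matrix.head_cons]
      norm_num [show (4:ℝ)/5 - x 1 - 2/5 = 2/5 - x 1 by ring,
        show (1:ℝ)/5 + x 0 - 1/2 = x 0 - 3/10 by ring]
    rw [hrw]
    have hval : dd (-(1/10)) (1/10) = Real.sqrt (1/50) := by
      rw [dd]; norm_num
    have hdiff := dd_diff_le (2/5 - x 1) (x 0 - 3/10) (-(1/10)) (1/10)
    rw [hval] at hdiff
    have hsm : dd (2/5 - x 1 - -(1/10)) (x 0 - 3/10 - 1/10) ≤ 2/1000 := by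
      apply dd_small
      · rw [show (2:ℝ)/5 - x 1 - -(1/10) = -(x 1 - 1/2) by ring, abs_neg]
        exact abs_le.mpr ⟨e1.1, e1.2⟩
      · rw [show x 0 - 3/10 - 1/10 = x 0 - 2/5 by ring]
        exact abs_le.mpr ⟨e0.1, e0.2⟩
    rw [abs_le] at hdiff
    have lb := sqrt_fifty_lb
    have ub := sqrt_fifty_ub
    exact omg2_plateau (by linarith [hdiff.1]) (by linarith [hdiff.2])
  rw [phi, hy, R2, tmap, hr2, rot_pi_half]
  apply funext2 <;>
    simp only [Matrix.cons_val_zero, Matrix.cons_val_one, Matrix.head_cons] <;> ring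

/-- Near `pp`, `phi ∘ phi` is an exact rotation by `3π/2` about `pp`. -/
lemma phi_phi_near_p {x : Fin 2 → ℝ} (hx : rr (2/5) (1/2) x ≤ 1/1000) :
    phi (phi x) = ![x 1 - 1/10, 9/10 - x 0] := by
  have e0 : |x 0 - 2/5| ≤ 1/1000 := le_trans (abs_le_dd_left _ _) hx
  have e1 : |x 1 - 1/2| ≤ 1/1000 := le_trans (abs_le_dd_right _ _) hx
  rw [abs_le] at e0 e1
  rw [phi_near_p hx]
  set z : Fin 2 → ℝ := ![7/10 - x 0, 9/10 - x 1] with hz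
  have hz0 : z 0 = 7/10 - x 0 := rfl
  have hz1 : z 1 = 9/10 - x 1 := rfl
  -- first twist near q is exact π/2 rotation
  have hr1 : omg1 (rr (3/10) (1/2) z) = Real.pi/2 := by
    apply omg1_plateau
    · calc (9/100:ℝ) ≤ -(z 1 - 1/2) := by rw [hz1]; linarith [e1.1]
        _ ≤ |z 1 - 1/2| := neg_le_abs _
        _ ≤ rr (3/10) (1/2) z := abs_le_dd_right _ _
    · calc rr (3/10) (1/2) z ≤ |z 0 - 3/10| + |z 1 - 1/2| := dd_le_abs_add _ _
        _ ≤ 11/100 := by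
            have h0 : |z 0 - 3/10| ≤ 1/1000 := by
              rw [hz0]; exact abs_le.mpr ⟨by linarith [e0.2], by linarith [e0.1]⟩
            have h1 : |z 1 - 1/2| ≤ 101/1000 := by
              rw [hz1]; exact abs_le.mpr ⟨by linarith [e1.2], by linarith [e1.1]⟩
            linarith
  have hw : R1 z = ![x 1 - 1/10, 9/10 - x 0] := by
    rw [R1, tmap, hr1, rot_pi_half]
    apply funext2 <;>
      simp only [Matrix.cons_val_zero, Matrix.cons_val_one, Matrix.head_cons, hz0, hz1] <;> ring
  -- second twist near p is the identity
  have hr2 : omg2 (rr (2/5) (1/2) (![x 1 - 1/10, 9/10 - x 0] : Fin 2 → ℝ)) = 0 := by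
    apply omg2_zero_left
    calc rr (2/5) (1/2) (![x 1 - 1/10, 9/10 - x 0] : Fin 2 → ℝ)
        ≤ |(![x 1 - 1/10, 9/10 - x 0] : Fin 2 → ℝ) 0 - 2/5|
          + |(![x 1 - 1/10, 9/10 - x 0] : Fin 2 → ℝ) 1 - 1/2| := dd_le_abs_add _ _
      _ ≤ 125/1000 := by
          simp only [Matrix.cons_val_zero, Matrix.cons_val_one, Matrix.head_cons]
          have h0 : |x 1 - 1/10 - 2/5| ≤ 1/1000 := abs_le.mpr ⟨by linarith [e1.1], by linarith [e1.2]⟩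
          have h1 : |9/10 - x 0 - 1/2| ≤ 1/1000 := abs_le.mpr ⟨by linarith [e0.2], by linarith [e0.1]⟩
          linarith
  rw [phi, hw, R2, tmap_id_of hr2]

lemma rr_pp : rr (2/5) (1/2) pp = 0 := by
  rw [rr, pp]
  simp only [Matrix.cons_val_zero, Matrix.cons_val_one, Matrix.head_cons]
  norm_num [dd]

lemma phi_pp : phi pp = qq := by
  rw [phi_near_p (by rw [rr_pp]; norm_num)]
  apply funext2 <;> simp [pp, qq] <;> norm_num

lemma phi_qq : phi qq = pp := by
  have hr1 : omg1 (rr (3/10) (1/2) qq) = Real.pi/2 := by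
    have : rr (3/10) (1/2) qq = 1/10 := by
      rw [rr, qq]
      simp only [Matrix.cons_val_zero, Matrix.cons_val_one, Matrix.head_cons]
      rw [show (3:ℝ)/10 - 3/10 = 0 by ring, show (2:ℝ)/5 - 1/2 = -(1/10) by ring]
      rw [dd, show (0:ℝ)^2 + (-(1/10))^2 = (1/10)^2 by norm_num, Real.sqrt_sq (by norm_num)]
    rw [this]
    exact omg1_plateau (by norm_num) (by norm_num)
  have hw : R1 qq = pp := by
    rw [R1, tmap, hr1, rot_pi_half]
    apply funext2 <;> simp [pp, qq] <;> norm_num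
  have hr2 : omg2 (rr (2/5) (1/2) pp) = 0 := by rw [rr_pp]; exact omg2_zero_left (by norm_num)
  rw [phi, hw, R2, tmap_id_of hr2]

lemma pp_ne_qq : pp ≠ qq := by
  intro h
  have := congrFun h 0
  rw [pp, qq] at this
  simp only [Matrix.cons_val_zero] at this
  norm_num at this

/-- the isolated-period-2 property -/
lemma isolated_p {x : Fin 2 → ℝ} (hx : rr (2/5) (1/2) x ≤ 1/1000)
    (h : phi (phi x) = x) : x = pp := by
  rw [phi_phi_near_p hx] at h
  have h0 := congrFun h 0
  have h1 := congrFun h 1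
  simp only [Matrix.cons_val_zero, Matrix.cons_val_one, Matrix.head_cons] at h0 h1
  apply funext2 <;> rw [pp] <;>
    simp only [Matrix.cons_val_zero, Matrix.cons_val_one, Matrix.head_cons] <;> linarith

/-! ### Uniqueness of solutions and the main obstruction -/

lemma ode_unique {K : NNReal} {U : (Fin 2 → ℝ) → (Fin 2 → ℝ)} (hU : LipschitzWith K U)
    {f g : ℝ → (Fin 2 → ℝ)} (hf : ∀ t, HasDerivAt f (U (f t)) t)
    (hg : ∀ t, HasDerivAt g (U (g t)) t) {t₀ : ℝ} (h : f t₀ = g t₀) (t : ℝ) : f t = g t := by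
  have key : EqOn f g (Ioo (min t₀ t - 1) (max t₀ t + 1)) := by
    apply ODE_solution_unique_of_mem_Ioo (v := fun _ => U) (s := fun _ => univ)
      (K := K) (fun _ _ => hU.lipschitzOnWith)
      (t₀ := t₀)
      ⟨by linarith [min_le_left t₀ t], by linarith [le_max_left t₀ t]⟩
      (fun s _ => ⟨hf s, trivial⟩) (fun s _ => ⟨hg s, trivial⟩) h
  exact key ⟨by linarith [min_le_right t₀ t], by linarith [le_max_right t₀ t]⟩

/-- The main obstruction: no Lipschitz vector field has `phi` as its time-1 flow. -/
lemma no_single_flow {K : NNReal} {U ψ : (Fin 2 → ℝ) → (Fin 2 → ℝ)} (hU : LipschitzWith K U)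
    (hψ : IsTime1Flow U ψ) (hψφ : ∀ x, ψ x = phi x) : False := by
  choose Γ h0 hD h1 using hψ
  -- shifting time along a solution
  have shift : ∀ (x : Fin 2 → ℝ) (t s : ℝ), Γ x (t + s) = Γ (Γ x t) s := by
    intro x t s
    have hsol : ∀ s : ℝ, HasDerivAt (fun u => Γ x (t + u)) (U (Γ x (t + s))) s := by
      intro s
      have hcomp := (hD x (t + s)).scomp s ((hasDerivAt_id s).const_add t)
      simpa [Function.comp_def] using hcomp
    have heq : Γ x (t + 0) = Γ (Γ x t) 0 := by rw [add_zero, h0]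
    exact ode_unique (t₀ := 0) hU hsol (hD (Γ x t)) heq s
  have key : ∀ (x : Fin 2 → ℝ) (t : ℝ), Γ x (t + 1) = ψ (Γ x t) := by
    intro x t; rw [shift x t 1, h1]
  have g1 : Γ pp 1 = qq := by
    have := key pp 0
    rw [zero_add, h0, hψφ, phi_pp] at this
    exact this
  have g2 : Γ pp 2 = pp := by
    have := key pp 1
    rw [g1, hψφ, phi_qq, show (1:ℝ) + 1 = 2 by norm_num] at this
    exact this
  -- 2-periodicity
  have per : ∀ t, Γ pp (t + 2) = Γ pp t := by
    intro t
    have hsol : ∀ s : ℝ, HasDerivAt (fun u => Γ pp (u + 2)) (U (Γ pp (s + 2))) s := by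
      intro s
      have hcomp := (hD pp (s + 2)).scomp s ((hasDerivAt_id s).add_const 2)
      simpa [Function.comp_def] using hcomp
    have heq : Γ pp (0 + 2) = Γ pp 0 := by rw [zero_add, g2, h0]
    exact ode_unique (t₀ := 0) hU hsol (hD pp) heq t
  -- the whole orbit consists of points of period dividing 2
  have orbit2 : ∀ t, phi (phi (Γ pp t)) = Γ pp t := by
    intro t
    have k1 : ψ (Γ pp t) = Γ pp (t + 1) := (key pp t).symm
    have k2 : ψ (Γ pp (t + 1)) = Γ pp (t + 2) := by
      have := key pp (t + 1); rw [show t + 1 + 1 = t + 2 by ring] at this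
      exact this.symm
    rw [← hψφ, ← hψφ, k1, k2, per]
  -- the set of times where the orbit sits at p is clopen
  have γcont : Continuous (Γ pp) := by
    rw [continuous_iff_continuousAt]
    exact fun t => (hD pp t).continuousAt
  have hclosed : IsClosed {t : ℝ | Γ pp t = pp} := isClosed_eq γcont continuous_const
  have hmem0 : (0 : ℝ) ∈ {t : ℝ | Γ pp t = pp} := h0 pp
  have hopen : IsOpen {t : ℝ | Γ pp t = pp} := by
    rw [isOpen_iff_mem_nhds]
    intro t0 ht0
    have hc : Continuous fun t => rr (2/5) (1/2) (Γ pp t) := (rr_continuous _ _).comp γcont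
    have hval : rr (2/5) (1/2) (Γ pp t0) = 0 := by
      rw [show Γ pp t0 = pp from ht0, rr_pp]
    have hV := ContinuousAt.preimage_mem_nhds (hc.continuousAt)
      (by rw [hval]; exact Iio_mem_nhds (by norm_num : (0:ℝ) < 1/1000))
    refine Filter.mem_of_superset hV ?_
    intro t ht
    exact isolated_p (le_of_lt ht) (orbit2 t)
  have huniv : {t : ℝ | Γ pp t = pp} = univ := by
    rcases isClopen_iff.mp ⟨hclosed, hopen⟩ with hemp | huniv
    · exact absurd (hemp ▸ hmem0) (Set.notMem_empty 0)
    · exact huniv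
  have h1A : Γ pp 1 = pp := by
    have : (1:ℝ) ∈ {t : ℝ | Γ pp t = pp} := huniv ▸ Set.mem_univ 1
    exact this
  exact pp_ne_qq (h1A.symm.trans g1)

/-! ### Support and assembly -/


lemma rr_ge_of_notcube {a b : ℝ} (ha1 : 1/5 ≤ a) (ha2 : a ≤ 4/5) (hb1 : 1/5 ≤ b)
    (hb2 : b ≤ 4/5) {x : Fin 2 → ℝ} (hx : x ∉ cube01 2) : 1/5 ≤ rr a b x := by
  simp only [cube01, Set.mem_pi, Set.mem_univ, forall_true_left, Set.mem_Icc] at hx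
  push_neg at hx
  obtain ⟨i, hi⟩ := hx
  fin_cases i
  · have hi' : 0 ≤ x 0 → 1 < x 0 := hi
    have h' : 1/5 ≤ |x 0 - a| := by
      rcases lt_or_ge (x 0) 0 with h | h
      · rw [abs_sub_comm]
        calc (1/5:ℝ) ≤ a - x 0 := by linarith
          _ ≤ |a - x 0| := le_abs_self _
      · have h2 := hi' h
        calc (1/5:ℝ) ≤ x 0 - a := by linarith
          _ ≤ |x 0 - a| := le_abs_self _
    exact le_trans h' (abs_le_dd_left _ _)
  · have hi' : 0 ≤ x 1 → 1 < x 1 := hi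
    have h' : 1/5 ≤ |x 1 - b| := by
      rcases lt_or_ge (x 1) 0 with h | h
      · rw [abs_sub_comm]
        calc (1/5:ℝ) ≤ b - x 1 := by linarith
          _ ≤ |b - x 1| := le_abs_self _
      · have h2 := hi' h
        calc (1/5:ℝ) ≤ x 1 - b := by linarith
          _ ≤ |x 1 - b| := le_abs_self _
    exact le_trans h' (abs_le_dd_right _ _)

lemma tvf_eq_zero {a b : ℝ} {ω : ℝ → ℝ} {x : Fin 2 → ℝ} (h : ω (rr a b x) = 0) :
    tvf a b ω x = 0 := by
  apply funext2 <;> simp [tvf, h]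

/-- concrete fields -/
def Wf : (Fin 2 → ℝ) → (Fin 2 → ℝ) := tvf (3/10) (1/2) omg1
def Vf : (Fin 2 → ℝ) → (Fin 2 → ℝ) := tvf (2/5) (1/2) omg2

lemma Wf_lip : LipschitzWith 100 Wf :=
  tvf_lipschitz _ _ omg1 200 2 (1/5) (by norm_num) (by norm_num) (by norm_num)
    omg1_lip omg1_bound (fun r hr => omg1_supp hr) 100 (by norm_num)

lemma Vf_lip : LipschitzWith 100 Vf :=
  tvf_lipschitz _ _ omg2 200 2 (1/5) (by norm_num) (by norm_num) (by norm_num)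
    omg2_lip omg2_bound (fun r hr => omg2_supp hr) 100 (by norm_num)

lemma Wf_zero : ZeroOutside Wf (cube01 2) := fun x hx =>
  tvf_eq_zero (omg1_supp (rr_ge_of_notcube (by norm_num) (by norm_num) (by norm_num)
    (by norm_num) hx))

lemma Vf_zero : ZeroOutside Vf (cube01 2) := fun x hx =>
  tvf_eq_zero (omg2_supp (rr_ge_of_notcube (by norm_num) (by norm_num) (by norm_num)
    (by norm_num) hx))

lemma phi_supp : SuppDaggerOn phi (cube01 2) := by
  intro x hx
  have h1 : R1 x = x := tmap_id_of (omg1_supp (rr_ge_of_notcube (by norm_num) (by norm_num)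
    (by norm_num) (by norm_num) hx))
  have h2 : R2 x = x := tmap_id_of (omg2_supp (rr_ge_of_notcube (by norm_num) (by norm_num)
    (by norm_num) (by norm_num) hx))
  rw [phi, h1, h2]

/-- flows of Lipschitz twist fields are forced -/
lemma flow_forced {a b : ℝ} {ω : ℝ → ℝ} {K : NNReal} (hLip : LipschitzWith K (tvf a b ω))
    {f : (Fin 2 → ℝ) → (Fin 2 → ℝ)} (hf : IsTime1Flow (tvf a b ω) f) (x : Fin 2 → ℝ) :
    f x = tmap a b ω x := by
  obtain ⟨γ, hγ0, hγD, hγ1⟩ := hf x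
  have huniq := ode_unique (t₀ := 0) hLip hγD (fun t => tcur_hasDerivAt a b ω x t)
    (by rw [hγ0, tcur_zero]) 1
  rw [← hγ1, huniq, tcur_one]

def phiHomeo : Homeomorph (Fin 2 → ℝ) (Fin 2 → ℝ) :=
  (tHomeo (3/10) (1/2) omg1 omg1_continuous).trans (tHomeo (2/5) (1/2) omg2 omg2_continuous)

lemma phiHomeo_coe : ⇑phiHomeo = phi := rfl

lemma phi_continuous : Continuous phi :=
  (tmap_continuous _ _ omg2 omg2_continuous).comp (tmap_continuous _ _ omg1 omg1_continuous)

/-- **Statement 4.** There is `T > 1` with `ℋ_d^{T,0}([0,1]^d)` non-empty: concretely, there are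
Lipschitz vector fields `V, W` on `ℝ²` supported in `[0,1]²` whose time-1 flows compose to a map
that is not the time-1 flow of any Lipschitz vector field supported in `[0,1]²`. -/
theorem incremental_nontrivial :
    (∃ T : ℕ, 1 < T ∧ ∃ φ : (Fin 2 → ℝ) → (Fin 2 → ℝ),
      (∃ h : Homeomorph (Fin 2 → ℝ) (Fin 2 → ℝ), ⇑h = φ) ∧ HomotopicToId φ ∧
      SuppDaggerOn φ (cube01 2) ∧ RepByLipFlows 2 T φ ∧
      ∀ T' : ℕ, 0 < T' → T' < T → ¬ RepByLipFlows 2 T' φ) ∧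
    ∃ V W : (Fin 2 → ℝ) → (Fin 2 → ℝ),
      (∃ K : NNReal, LipschitzWith K V) ∧ ZeroOutside V (cube01 2) ∧
      (∃ K : NNReal, LipschitzWith K W) ∧ ZeroOutside W (cube01 2) ∧
      ∀ φV φW : (Fin 2 → ℝ) → (Fin 2 → ℝ),
        IsTime1Flow V φV → IsTime1Flow W φW →
        ¬ ∃ U : (Fin 2 → ℝ) → (Fin 2 → ℝ),
            (∃ K : NNReal, LipschitzWith K U) ∧ ZeroOutside U (cube01 2) ∧
            IsTime1Flow U (φV ∘ φW) := by
  constructor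
  · refine ⟨2, by norm_num, phi, ⟨phiHomeo, phiHomeo_coe⟩, ?_, phi_supp, ?_, ?_⟩
    · -- homotopic to the identity via the straight-line homotopy
      refine ⟨⟨phi, phi_continuous⟩, rfl,
        ⟨{ toFun := fun q => (1 - (q.1 : ℝ)) • phi q.2 + (q.1 : ℝ) • q.2,
           continuous_toFun := ?_, map_zero_left := ?_, map_one_left := ?_ }⟩⟩
      · have h1 : Continuous fun q : unitInterval × (Fin 2 → ℝ) => (q.1 : ℝ) :=
          continuous_subtype_val.comp continuous_fst
        exact ((continuous_const.sub h1).smul (phi_continuous.comp continuous_snd)).add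
          (h1.smul continuous_snd)
      · intro x; simp
      · intro x; simp
    · -- phi is represented by two Lipschitz flows
      refine ⟨fun t => if t = 0 then Wf else Vf, ?_, fun t => if t = 0 then R1 else R2, ?_, ?_⟩
      · intro t ht
        interval_cases t
        · exact ⟨⟨100, Wf_lip⟩, Wf_zero⟩
        · exact ⟨⟨100, Vf_lip⟩, Vf_zero⟩
      · intro t ht
        interval_cases t
        · exact tmap_isTime1Flow (3/10) (1/2) omg1
        · exact tmap_isTime1Flow (2/5) (1/2) omg2
      · funext x
        simp [compFlows, phi, R1, R2]
    · -- phi is not represented by a single Lipschitz flow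
      intro T' hT0 hT2
      interval_cases T'
      rintro ⟨V, hV, ψs, hψs, hφeq⟩
      obtain ⟨⟨K, hK⟩, -⟩ := hV 0 (by norm_num)
      exact no_single_flow hK (hψs 0 (by norm_num)) (fun x => by rw [hφeq]; rfl)
  · refine ⟨Vf, Wf, ⟨100, Vf_lip⟩, Vf_zero, ⟨100, Wf_lip⟩, Wf_zero, ?_⟩
    rintro φV φW hφV hφW ⟨U, ⟨K, hK⟩, -, hUflow⟩
    have hVeq : ∀ x, φV x = R2 x := flow_forced Vf_lip hφV
    have hWeq : ∀ x, φW x = R1 x := flow_forced Wf_lip hφW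
    refine no_single_flow hK hUflow (fun x => ?_)
    show φV (φW x) = phi x
    rw [hWeq, hVeq]
    rfl
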